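/- Let B : [0,∞) → (0,1] be smooth with B(0) = 1, B'(0) = 0, B''(0) < 0, B strictly decreasing on (0,∞), and B(r) → 0 as r → ∞. Let z₀ : [0,1] → (0,1] be smooth with z₀(0) = 1, z₀'(0) = 0. Then for every R > 0 there exists τ̲ such that for all τ ≥ τ̲ and A₁ > 0 fixed: B(A₁e^{τ/2}u) ≤ z₀(u) for all u ∈ [0, 2e^{−τ/2}R]. That is, the steeply rescaled Bryant profile eventually fits below z₀ near u = 0. -/

import Mathlib

open Set Filter

lemma quad_bound (f : ℝ → ℝ) (hf : ContDiff ℝ 2 f) (hf'0 : deriv f 0 = 0)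
    (c : ℝ) (hc : deriv (deriv f) 0 < c) :
    ∃ δ > (0:ℝ), ∀ r ∈ Icc (0:ℝ) δ, f r ≤ f 0 + c / 2 * r ^ 2 := by
  have hd : Differentiable ℝ f := hf.differentiable (by norm_num)
  have hg : ContDiff ℝ 1 (deriv f) := by
    have := (contDiff_succ_iff_deriv (n := 1)).mp (by exact_mod_cast hf)
    exact this.2.2
  have hgd : Differentiable ℝ (deriv f) := hg.differentiable (by norm_num)
  have hcont : Continuous (deriv (deriv f)) := by
    have := (contDiff_succ_iff_deriv (n := 0)).mp (by exact_mod_cast hg)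
    exact this.2.2.continuous
  have hev : ∀ᶠ r in nhds (0:ℝ), deriv (deriv f) r < c :=
    (hcont.continuousAt (x := 0)).eventually_lt continuousAt_const hc
  obtain ⟨ε, hε, hball⟩ := Metric.eventually_nhds_iff.mp hev
  refine ⟨ε/2, by linarith, ?_⟩
  have hsub : ∀ r ∈ Icc (0:ℝ) (ε/2), deriv (deriv f) r < c := by
    intro r hr
    exact hball (by rw [Real.dist_eq]; rw [sub_zero]; rw [abs_of_nonneg hr.1]; linarith [hr.2])
  -- step 1 : deriv f r ≤ c * r on Icc 0 (ε/2)
  have step1 : ∀ r ∈ Icc (0:ℝ) (ε/2), deriv f r ≤ c * r := by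
    have hanti : AntitoneOn (fun r => deriv f r - c * r) (Icc 0 (ε/2)) := by
      apply antitoneOn_of_deriv_nonpos (convex_Icc _ _)
      · exact (hgd.continuous.sub (continuous_const.mul continuous_id)).continuousOn
      · exact ((hgd.sub ((differentiable_const c).mul differentiable_id)).differentiableOn).mono
          interior_subset
      · intro x hx
        rw [interior_Icc] at hx
        have : deriv (fun r => deriv f r - c * r) x = deriv (deriv f) x - c := by
          rw [deriv_fun_sub (hgd x) (by fun_prop)]
          have hc' : deriv (fun r : ℝ => c * r) x = c := by
            simpa using deriv_const_mul c (differentiableAt_id' (x := x))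
          rw [show (HMul.hMul c) = (fun r : ℝ => c * r) from rfl, hc']
        rw [this]
        have := hsub x ⟨le_of_lt hx.1, le_of_lt hx.2⟩
        linarith
    intro r hr
    have h0 : (0:ℝ) ∈ Icc (0:ℝ) (ε/2) := ⟨le_refl _, by linarith⟩
    have := hanti h0 hr hr.1
    simp [hf'0] at this
    linarith
  -- step 2
  have hanti2 : AntitoneOn (fun r => f r - c / 2 * r ^ 2) (Icc 0 (ε/2)) := by
    apply antitoneOn_of_deriv_nonpos (convex_Icc _ _)
    · exact (hd.continuous.sub (continuous_const.mul (continuous_pow 2))).continuousOn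
    · exact ((hd.sub ((differentiable_const _).mul (differentiable_pow 2))).differentiableOn).mono
        interior_subset
    · intro x hx
      rw [interior_Icc] at hx
      have hdx : deriv (fun r => f r - c / 2 * r ^ 2) x = deriv f x - c * x := by
        rw [deriv_fun_sub (hd x) (by fun_prop)]
        rw [deriv_const_mul _ (by fun_prop)]
        simp [deriv_pow_field]
        ring
      rw [hdx]
      have := step1 x ⟨le_of_lt hx.1, le_of_lt hx.2⟩
      linarith
  intro r hr
  have h0 : (0:ℝ) ∈ Icc (0:ℝ) (ε/2) := ⟨le_refl _, by linarith⟩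
  have := hanti2 h0 hr hr.1
  simp at this
  linarith

/-- The steeply rescaled Bryant profile eventually fits below `z₀` near `u = 0`:
for `B` with `B(0) = 1`, `B'(0) = 0`, `B''(0) < 0`, `B` strictly decreasing on `(0,∞)`
with `B → 0` at infinity, and `z₀` with `z₀(0) = 1`, `z₀'(0) = 0`, for every `R > 0`
and `A₁ > 0` there is `τ̲` with `B(A₁e^{τ/2}u) ≤ z₀(u)` for all `τ ≥ τ̲` and
`u ∈ [0, 2e^{−τ/2}R]`. -/
theorem stmt18 (B z₀ : ℝ → ℝ)
    (hB : ContDiff ℝ 2 B) (hBrange : ∀ r ≥ (0 : ℝ), 0 < B r ∧ B r ≤ 1)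
    (hB0 : B 0 = 1) (hB'0 : deriv B 0 = 0) (hB''0 : deriv (deriv B) 0 < 0)
    (hBanti : StrictAntiOn B (Ioi 0))
    (hBlim : Tendsto B atTop (nhds 0))
    (hz : ContDiff ℝ 2 z₀) (hzrange : ∀ u ∈ Icc (0 : ℝ) 1, 0 < z₀ u ∧ z₀ u ≤ 1)
    (hz0 : z₀ 0 = 1) (hz'0 : deriv z₀ 0 = 0) :
    ∀ R > (0 : ℝ), ∀ A₁ > (0 : ℝ), ∃ τ₀ : ℝ, ∀ τ ≥ τ₀,
      ∀ u ∈ Icc (0 : ℝ) (2 * Real.exp (-τ / 2) * R),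
        B (A₁ * Real.exp (τ / 2) * u) ≤ z₀ u := by
  intro R hR A₁ hA₁
  -- quadratic upper bound for B near 0
  obtain ⟨δB, hδB, hBq⟩ := quad_bound B hB hB'0 (deriv (deriv B) 0 / 2) (by linarith)
  set cB : ℝ := -(deriv (deriv B) 0) / 4 with hcBdef
  have hcB : 0 < cB := by rw [hcBdef]; linarith
  have hBq' : ∀ r ∈ Icc (0:ℝ) δB, B r ≤ 1 - cB * r ^ 2 := by
    intro r hr
    have := hBq r hr
    rw [hB0] at this
    rw [hcBdef]; nlinarith [sq_nonneg r]
  -- quadratic lower bound for z₀ near 0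
  have hnz : ContDiff ℝ 2 (fun u => -z₀ u) := hz.neg
  have hder1 : (deriv fun u => -z₀ u) = fun u => -(deriv z₀ u) := by
    funext u; exact deriv.neg
  have hnz'0 : deriv (fun u => -z₀ u) 0 = 0 := by rw [hder1]; simp [hz'0]
  have hnz'' : deriv (deriv fun u => -z₀ u) 0 = -(deriv (deriv z₀) 0) := by
    rw [hder1]; exact deriv.neg
  set Kc : ℝ := -(deriv (deriv z₀) 0) + 1 with hKcdef
  obtain ⟨δz, hδz, hzq⟩ := quad_bound (fun u => -z₀ u) hnz hnz'0 Kc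
    (by rw [hnz'', hKcdef]; linarith)
  set Kz : ℝ := Kc / 2 with hKzdef
  have hzq' : ∀ u ∈ Icc (0:ℝ) δz, 1 - Kz * u ^ 2 ≤ z₀ u := by
    intro u hu
    have := hzq u hu
    simp only [hz0] at this
    rw [hKzdef]; nlinarith
  -- B δB < 1
  have hBδ1 : B δB < 1 := by
    have h1 : B δB < B (δB / 2) := hBanti (by simp [mem_Ioi]; linarith) (mem_Ioi.mpr hδB)
      (by linarith)
    have h2 := (hBrange (δB / 2) (by linarith)).2
    linarith
  -- eventual conditions
  have he : Tendsto (fun τ : ℝ => Real.exp (-τ / 2)) atTop (nhds 0) := by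
    apply Real.tendsto_exp_atBot.comp
    apply Tendsto.atBot_div_const (by norm_num : (0:ℝ) < 2)
    exact tendsto_neg_atTop_atBot
  have hcond1 : ∀ᶠ τ : ℝ in atTop, 2 * Real.exp (-τ / 2) * R ≤ δz := by
    have : Tendsto (fun τ : ℝ => 2 * Real.exp (-τ / 2) * R) atTop (nhds 0) := by
      simpa using (he.const_mul 2).mul_const R
    filter_upwards [this.eventually_lt_const hδz] with τ h using le_of_lt h
  have hcond2 : ∀ᶠ τ : ℝ in atTop, Kz ≤ cB * A₁ ^ 2 * Real.exp τ := by
    have : Tendsto (fun τ : ℝ => cB * A₁ ^ 2 * Real.exp τ) atTop atTop :=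
      Tendsto.const_mul_atTop (by positivity) Real.tendsto_exp_atTop
    exact this.eventually_ge_atTop Kz
  have hcond3 : ∀ᶠ τ : ℝ in atTop,
      Kz * ((2 * Real.exp (-τ / 2) * R) ^ 2) < 1 - B δB := by
    have : Tendsto (fun τ : ℝ => Kz * ((2 * Real.exp (-τ / 2) * R) ^ 2)) atTop (nhds 0) := by
      have h2 : Tendsto (fun τ : ℝ => (2 * Real.exp (-τ / 2) * R) ^ 2) atTop (nhds 0) := by
        have := ((he.const_mul 2).mul_const R)
        simpa using this.pow 2
      simpa using h2.const_mul Kz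
    exact this.eventually_lt_const (by linarith)
  obtain ⟨τ₀, hτ₀⟩ := eventually_atTop.mp ((hcond1.and hcond2).and hcond3)
  refine ⟨τ₀, fun τ hτ u hu => ?_⟩
  obtain ⟨⟨hc1, hc2⟩, hc3⟩ := hτ₀ τ hτ
  obtain ⟨hu0, hu2⟩ := hu
  have hEpos : 0 < Real.exp (-τ / 2) := Real.exp_pos _
  have huδz : u ∈ Icc (0:ℝ) δz := ⟨hu0, le_trans hu2 hc1⟩
  have hzlb := hzq' u huδz
  have hu2sq : u ^ 2 ≤ (2 * Real.exp (-τ / 2) * R) ^ 2 := by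
    apply sq_le_sq' <;> nlinarith
  set r : ℝ := A₁ * Real.exp (τ / 2) * u with hrdef
  have hr0 : 0 ≤ r := by positivity
  rcases le_or_gt r δB with hcase | hcase
  · -- small r : quadratic comparison
    have hBr := hBq' r ⟨hr0, hcase⟩
    have hexp : Real.exp (τ / 2) ^ 2 = Real.exp τ := by
      rw [sq, ← Real.exp_add]; ring_nf
    have hrsq : r ^ 2 = A₁ ^ 2 * Real.exp τ * u ^ 2 := by
      rw [hrdef, mul_pow, mul_pow, hexp]
    rw [hrsq] at hBr
    have hmm : Kz * u ^ 2 ≤ cB * A₁ ^ 2 * Real.exp τ * u ^ 2 :=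
      mul_le_mul_of_nonneg_right hc2 (sq_nonneg u)
    have hassoc : cB * (A₁ ^ 2 * Real.exp τ * u ^ 2) = cB * A₁ ^ 2 * Real.exp τ * u ^ 2 := by
      ring
    rw [hassoc] at hBr
    linarith
  · -- large r : use monotonicity
    have hBr : B r < B δB := hBanti (mem_Ioi.mpr hδB) (mem_Ioi.mpr (lt_trans hδB hcase)) hcase
    have hKzu : Kz * u ^ 2 < 1 - B δB := by
      rcases le_or_gt 0 Kz with hK | hK
      · have h1 : Kz * u ^ 2 ≤ Kz * (2 * Real.exp (-τ / 2) * R) ^ 2 :=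
          mul_le_mul_of_nonneg_left hu2sq hK
        linarith
      · have h1 : Kz * u ^ 2 ≤ 0 := mul_nonpos_of_nonpos_of_nonneg hK.le (sq_nonneg u)
        linarith
    linarith
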